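/- The monoid IC_n is generated by its quasi-idempotents: every element of IC_n is a finite product of elements α ∈ IC_n satisfying α⁴ = α². -/

import Mathlib

open scoped Classical

namespace ICCatalan

/-- Partial injective transformations on `Fin n` (representing the chain `[n] = {1,…,n}`). -/
abbrev PT (n : ℕ) := Fin n ≃. Fin n

/-- Composition (left-to-right, `x(αβ) = (xα)β`) makes `PT n` a monoid. -/
noncomputable instance instMonoidPT (n : ℕ) : Monoid (PT n) where
  mul f g := f.trans g
  one := PEquiv.refl (Fin n)
  mul_assoc := PEquiv.trans_assoc
  one_mul := PEquiv.refl_trans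
  mul_one := PEquiv.trans_refl

lemma mul_def {n : ℕ} (f g : PT n) : f * g = f.trans g := rfl

/-- The domain of a partial transformation. -/
def pdom {n : ℕ} (f : PT n) : Set (Fin n) := {x | ∃ y, f x = some y}

/-- The image of a partial transformation. -/
def pim {n : ℕ} (f : PT n) : Set (Fin n) := {y | ∃ x, f x = some y}

/-- The height `|im f|` of a partial transformation. -/
noncomputable def height {n : ℕ} (f : PT n) : ℕ := (pim f).ncard

/-- `f` is order-decreasing: `xf ≤ x` on the domain. -/
def IsDecr {n : ℕ} (f : PT n) : Prop := ∀ x y : Fin n, f x = some y → y ≤ x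

/-- `f` is isotone: `x ≤ y` implies `xf ≤ yf` on the domain. -/
def IsIso {n : ℕ} (f : PT n) : Prop :=
  ∀ x₁ x₂ y₁ y₂ : Fin n, f x₁ = some y₁ → f x₂ = some y₂ → x₁ ≤ x₂ → y₁ ≤ y₂

/-- The injective partial Catalan monoid `IC_n`: all isotone order-decreasing
partial injective transformations of `[n]`. -/
def IC (n : ℕ) : Set (PT n) := {f | IsIso f ∧ IsDecr f}

/-- `Q'_n = {α ∈ IC_n : 1 ∉ dom α}` (the least element of `Fin n` plays the role of `1 ∈ [n]`). -/
def Qp (n : ℕ) : Set (PT n) := {f | f ∈ IC n ∧ ∀ x : Fin n, (x : ℕ) = 0 → f x = none}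

/-- `S¹ : S` with an identity adjoined (realized inside `PT n`). -/
def SOne {n : ℕ} (S : Set (PT n)) : Set (PT n) := S ∪ {1}

/-- The starred Green relation `L*` of the subsemigroup `S`. -/
def LStar {n : ℕ} (S : Set (PT n)) (a b : PT n) : Prop :=
  ∀ x ∈ SOne S, ∀ y ∈ SOne S, (a * x = a * y ↔ b * x = b * y)

/-- The starred Green relation `R*` of the subsemigroup `S`. -/
def RStar {n : ℕ} (S : Set (PT n)) (a b : PT n) : Prop :=
  ∀ x ∈ SOne S, ∀ y ∈ SOne S, (x * a = y * a ↔ x * b = y * b)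

/-- The starred Green relation `H* = L* ∩ R*`. -/
def HStar {n : ℕ} (S : Set (PT n)) (a b : PT n) : Prop :=
  LStar S a b ∧ RStar S a b

/-- The partial identity on a subset `A` of `[n]`. -/
noncomputable def pid {n : ℕ} (A : Set (Fin n)) : PT n := PEquiv.ofSet A

/-- An essential element: exactly one point `y` of the domain is moved, and `yf = y - 1`. -/
def IsEssential {n : ℕ} (f : PT n) : Prop :=
  ∃ y z : Fin n, f y = some z ∧ (z : ℕ) + 1 = (y : ℕ) ∧
    ∀ x w : Fin n, f x = some w → w ≠ x → x = y

/-- The shift of `f`: the number of non-fixed points of its domain. -/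
noncomputable def shift {n : ℕ} (f : PT n) : ℕ := {x : Fin n | ∃ w, f x = some w ∧ w ≠ x}.ncard


lemma mul_apply {n : ℕ} (f g : PT n) (x : Fin n) : (f * g) x = (f x).bind g := rfl
noncomputable def sig {n : ℕ} (b b1 : Fin n) (h : (b:ℕ) + 1 = (b1:ℕ)) : PT n where
  toFun x := if x = b then none else if x = b1 then some b else some x
  invFun y := if y = b1 then none else if y = b then some b1 else some y
  inv a c := by
    have hne : b ≠ b1 := by intro e; rw [e] at h; omega
    split_ifs <;> simp_all [eq_comm, Option.mem_def]
lemma sig_apply {n : ℕ} (b b1 : Fin n) (h : (b:ℕ) + 1 = (b1:ℕ)) (x : Fin n) :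
    sig b b1 h x = if x = b then none else if x = b1 then some b else some x := rfl

lemma sig_sq_apply {n : ℕ} (b b1 : Fin n) (h : (b:ℕ) + 1 = (b1:ℕ)) (x : Fin n) :
    (sig b b1 h * sig b b1 h) x = if x = b ∨ x = b1 then none else some x := by
  have hne : b ≠ b1 := by intro e; rw [e] at h; omega
  rw [mul_apply, sig_apply]
  by_cases hb : x = b
  · simp [hb]
  by_cases hb1 : x = b1
  · simp [hb, hb1, sig_apply]
  · simp [hb, hb1, sig_apply]

lemma sig_pow {n : ℕ} (b b1 : Fin n) (h : (b:ℕ) + 1 = (b1:ℕ)) :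
    (sig b b1 h) ^ 4 = (sig b b1 h) ^ 2 := by
  have hsq : sig b b1 h * sig b b1 h * (sig b b1 h * sig b b1 h)
      = sig b b1 h * sig b b1 h := by
    apply PEquiv.ext; intro x
    rw [mul_apply (sig b b1 h * sig b b1 h), sig_sq_apply]
    by_cases hx : x = b ∨ x = b1
    · simp [hx]
    · simp [hx, sig_sq_apply]
  have h4 : (sig b b1 h) ^ 4 = (sig b b1 h)^2 * (sig b b1 h)^2 := by
    rw [← pow_add]
  rw [h4, pow_two, hsq]

lemma sig_spec {n : ℕ} {b b1 : Fin n} {h : (b:ℕ) + 1 = (b1:ℕ)} {x y : Fin n}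
    (hxy : sig b b1 h x = some y) :
    (y = x ∧ x ≠ b ∧ x ≠ b1) ∨ (x = b1 ∧ y = b) := by
  rw [sig_apply] at hxy
  split_ifs at hxy <;> simp_all

lemma sig_mem_IC {n : ℕ} (b b1 : Fin n) (h : (b:ℕ) + 1 = (b1:ℕ)) :
    sig b b1 h ∈ IC n := by
  constructor
  · intro x₁ x₂ y₁ y₂ h1 h2 hle
    rw [Fin.le_def] at hle ⊢
    rcases sig_spec h1 with ⟨rfl, hb, hb1⟩ | ⟨rfl, rfl⟩ <;>
      rcases sig_spec h2 with ⟨rfl, hb', hb1'⟩ | ⟨rfl, rfl⟩ <;>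
      (try simp only [ne_eq, Fin.ext_iff] at *) <;> omega
  · intro x y hxy
    rw [Fin.le_def]
    rcases sig_spec hxy with ⟨rfl, _, _⟩ | ⟨rfl, rfl⟩ <;> omega

lemma subid_closure {n : ℕ} (α : PT n) (hα : α ∈ IC n)
    (h : ∀ x y : Fin n, α x = some y → y = x) :
    α ∈ Subsemigroup.closure {β : PT n | β ∈ IC n ∧ β ^ 4 = β ^ 2} := by
  have hmul : α * α = α := by
    apply PEquiv.ext; intro x
    rw [mul_apply]
    cases hx : α x with
    | none => rfl
    | some y =>
      have := h x y hx; subst this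
      simp [hx]
  have h2 : α ^ 2 = α := by rw [sq, hmul]
  have h4 : α ^ 4 = α ^ 2 := by
    calc α ^ 4 = α ^ 2 * α ^ 2 := by rw [← pow_add]
    _ = α ^ 2 := by rw [h2, hmul]
  exact Subsemigroup.subset_closure ⟨hα, h4⟩

lemma trans_apply' {n : ℕ} (f g : PT n) (x : Fin n) : (f.trans g) x = (f x).bind g := rfl

/-- `IC_n` is generated by its quasi-idempotents: every element of `IC_n`
is a finite product of elements `α ∈ IC_n` satisfying `α⁴ = α²`. -/
theorem stmt10 (n : ℕ) (hn : 0 < n) :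
    ∀ α ∈ IC n,
      α ∈ Subsemigroup.closure {β : PT n | β ∈ IC n ∧ β ^ 4 = β ^ 2} := by
  have key : ∀ d : ℕ, ∀ α, α ∈ IC n →
      (∑ x : Fin n, ((x:ℕ) - (((α x).getD x : Fin n):ℕ))) ≤ d →
      α ∈ Subsemigroup.closure {β : PT n | β ∈ IC n ∧ β ^ 4 = β ^ 2} := by
    intro d
    induction d with
    | zero =>
      intro α hα hD
      apply subid_closure α hα
      intro x y hxy
      have h0 : (x:ℕ) - (((α x).getD x : Fin n):ℕ) = 0 := by
        have := Nat.le_zero.mp hD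
        exact Finset.sum_eq_zero_iff.mp this x (Finset.mem_univ x)
      rw [hxy] at h0
      simp only [Option.getD_some] at h0
      have hyx := hα.2 x y hxy
      rw [Fin.le_def] at hyx
      exact Fin.ext (by omega)
    | succ d ih =>
      intro α hα hD
      by_cases hsub : ∀ x y : Fin n, α x = some y → y = x
      · exact subid_closure α hα hsub
      push_neg at hsub
      obtain ⟨x₀, y₀, hx₀, hne₀⟩ := hsub
      set F : Finset (Fin n) := Finset.univ.filter (fun x => ∃ y, α x = some y ∧ y ≠ x) with hF
      have hFne : F.Nonempty := by
        refine ⟨x₀, ?_⟩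
        simp only [hF, Finset.mem_filter, Finset.mem_univ, true_and]
        exact ⟨y₀, hx₀, hne₀⟩
      set a := F.max' hFne with ha
      have haF : a ∈ F := F.max'_mem hFne
      obtain ⟨b, hab, hba⟩ : ∃ y, α a = some y ∧ y ≠ a := by
        simpa only [hF, Finset.mem_filter, Finset.mem_univ, true_and] using haF
      have hmax : ∀ x ∈ F, x ≤ a := fun x hx => F.le_max' x hx
      have hbne : (b:ℕ) ≠ (a:ℕ) := fun hc => hba (Fin.ext hc)
      have hble : (b:ℕ) ≤ (a:ℕ) := Fin.le_def.mp (hα.2 a b hab)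
      have hb1lt : (b:ℕ) + 1 < n := lt_of_le_of_lt (by omega) a.isLt
      set b1 : Fin n := ⟨(b:ℕ)+1, hb1lt⟩ with hb1v
      have hbb1 : (b:ℕ) + 1 = (b1:ℕ) := rfl
      have hinj : ∀ x : Fin n, α x = some b → x = a := fun x hx =>
        PEquiv.inj α (Option.mem_def.mpr hx) (Option.mem_def.mpr hab)
      have him : ∀ x, α x ≠ some b1 := by
        intro x hx
        have hax : a < x := by
          by_contra hle'
          have := Fin.le_def.mp (hα.1 x a b1 b hx hab (not_lt.mp hle'))
          rw [← hbb1] at this; omega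
        have hxF : x ∈ F := by
          simp only [hF, Finset.mem_filter, Finset.mem_univ, true_and]
          refine ⟨b1, hx, fun hc => ?_⟩
          have hd := Fin.le_def.mp (hα.2 x b1 hx)
          have : (b1:ℕ) = (x:ℕ) := congrArg Fin.val hc
          have hax' := Fin.lt_def.mp hax
          omega
        exact absurd (hmax x hxF) (not_le.mpr hax)
      set e := Equiv.swap b b1 with he
      set β : PT n := α.trans e.toPEquiv with hβ
      have hβa : β a = some b1 := by
        rw [hβ, trans_apply', hab, Option.bind_some, Equiv.toPEquiv_apply, he,
          Equiv.swap_apply_left]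
      have hβx : ∀ x, x ≠ a → β x = α x := by
        intro x hx
        rw [hβ, trans_apply']
        cases hy : α x with
        | none => rfl
        | some y =>
          rw [Option.bind_some, Equiv.toPEquiv_apply, he]
          have hyb : y ≠ b := fun hc => hx (hinj x (hc ▸ hy))
          have hyb1 : y ≠ b1 := fun hc => him x (hc ▸ hy)
          rw [Equiv.swap_apply_of_ne_of_ne hyb hyb1]
      have hβspec : ∀ x y : Fin n, β x = some y →
          (x = a ∧ y = b1) ∨ (α x = some y ∧ x ≠ a) := by
        intro x y hxy
        by_cases hx : x = a
        · subst hx; rw [hβa] at hxy; exact Or.inl ⟨rfl, (Option.some_injective _ hxy).symm⟩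
        · rw [hβx x hx] at hxy; exact Or.inr ⟨hxy, hx⟩
      have hβIC : β ∈ IC n := by
        constructor
        · intro x₁ x₂ y₁ y₂ h1 h2 hle
          rw [Fin.le_def] at hle ⊢
          rcases hβspec _ _ h1 with ⟨rfl, rfl⟩ | ⟨h1', hne1⟩ <;>
            rcases hβspec _ _ h2 with ⟨he2, rfl⟩ | ⟨h2', hne2⟩
          · omega
          · -- x₁ = a, α x₂ = y₂, a ≤ x₂, x₂ ≠ a
            have hby2 := Fin.le_def.mp (hα.1 a x₂ b y₂ hab h2' (Fin.le_def.mpr hle))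
            have : y₂ ≠ b := fun hc => hne2 (hinj x₂ (hc ▸ h2'))
            have : (y₂:ℕ) ≠ (b:ℕ) := fun hc => this (Fin.ext hc)
            omega
          · -- x₂ = a, α x₁ = y₁, x₁ ≤ a
            subst he2
            have := Fin.le_def.mp (hα.1 x₁ a y₁ b h1' hab (Fin.le_def.mpr hle))
            omega
          · exact Fin.le_def.mp (hα.1 x₁ x₂ y₁ y₂ h1' h2' (Fin.le_def.mpr hle))
        · intro x y hxy
          rcases hβspec _ _ hxy with ⟨rfl, rfl⟩ | ⟨h', _⟩
          · rw [Fin.le_def]; omega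
          · exact hα.2 x y h'
      have hDlt : (∑ x : Fin n, ((x:ℕ) - (((β x).getD x : Fin n):ℕ)))
          < (∑ x : Fin n, ((x:ℕ) - (((α x).getD x : Fin n):ℕ))) := by
        apply Finset.sum_lt_sum
        · intro i _
          by_cases hi : i = a
          · subst hi; rw [hβa, hab]; simp only [Option.getD_some]; omega
          · rw [hβx i hi]
        · refine ⟨a, Finset.mem_univ a, ?_⟩
          rw [hβa, hab]; simp only [Option.getD_some]; omega
      have hDβ : (∑ x : Fin n, ((x:ℕ) - (((β x).getD x : Fin n):ℕ))) ≤ d := by omega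
      have hfac : α = β * sig b b1 hbb1 := by
        apply PEquiv.ext; intro x
        rw [mul_apply]
        by_cases hx : x = a
        · subst hx
          rw [hβa, hab, Option.bind_some, sig_apply]
          have : b1 ≠ b := fun hc => by
            have := congrArg Fin.val hc; omega
          simp [this]
        · rw [hβx x hx]
          cases hy : α x with
          | none => rfl
          | some y =>
            rw [Option.bind_some, sig_apply]
            have hyb : y ≠ b := fun hc => hx (hinj x (hc ▸ hy))
            have hyb1 : y ≠ b1 := fun hc => him x (hc ▸ hy)
            simp [hyb, hyb1]
      rw [hfac]
      exact Subsemigroup.mul_mem _ (ih β hβIC hDβ)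
        (Subsemigroup.subset_closure ⟨sig_mem_IC b b1 hbb1, sig_pow b b1 hbb1⟩)
  exact fun α hα => key _ α hα le_rfl

end ICCatalan
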